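/- Let A ⊆ 𝒩 and suppose there exist a closed set F ⊆ 𝒩 and a continuous function π : 𝒩 → 𝒩 such that π is injective on F, π '' F = A, and the inverse function from A to F (the map sending each x ∈ A to the unique α ∈ F with π(α) = x) is continuous, where A carries the subspace topology. Then A is a Gδ subset of 𝒩. -/

import Mathlib

open Filter Set Topology Uniformity

/-- If `A ⊆ ℕ → ℕ` is the image of a closed set `F` under a continuous map `π` that is
injective on `F`, and the inverse map `A → F` is continuous, then `A` is a `Gδ` set. -/
theorem stmt7 (A F : Set (ℕ → ℕ)) (π : (ℕ → ℕ) → (ℕ → ℕ))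
    (hF : IsClosed F) (hπ : Continuous π) (hinj : Set.InjOn π F) (him : π '' F = A)
    (g : A → (ℕ → ℕ)) (hg : ∀ x : A, g x ∈ F ∧ π (g x) = (x : ℕ → ℕ))
    (hgc : Continuous g) :
    IsGδ A := by
  obtain ⟨V, hV⟩ := (𝓤 (ℕ → ℕ)).exists_antitone_basis
  -- oscillation sets
  set W : ℕ → Set (ℕ → ℕ) := fun n =>
    {x | ∃ U : Set (ℕ → ℕ), IsOpen U ∧ x ∈ U ∧
      ∀ a b : A, (a : ℕ → ℕ) ∈ U → (b : ℕ → ℕ) ∈ U → (g a, g b) ∈ V n} with hW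
  have hWopen : ∀ n, IsOpen (W n) := by
    intro n
    rw [isOpen_iff_mem_nhds]
    rintro x ⟨U, hU, hxU, hsmall⟩
    filter_upwards [hU.mem_nhds hxU] with y hy
    exact ⟨U, hU, hy, hsmall⟩
  have key : A = closure A ∩ ⋂ n, W n := by
    apply Subset.antisymm
    · intro x hx
      refine ⟨subset_closure hx, mem_iInter.2 fun n => ?_⟩
      -- continuity of g at x gives a small neighborhood
      obtain ⟨V', hV'u, hV's, hV'c⟩ := comp_symm_mem_uniformity_sets (hV.mem n)
      have hcont : Tendsto g (𝓝 (⟨x, hx⟩ : A)) (𝓝 (g ⟨x, hx⟩)) := hgc.continuousAt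
      have hball : g ⁻¹' (UniformSpace.ball (g ⟨x, hx⟩) V') ∈ 𝓝 (⟨x, hx⟩ : A) :=
        hcont (UniformSpace.ball_mem_nhds _ hV'u)
      rw [nhds_subtype_eq_comap, mem_comap] at hball
      obtain ⟨T, hT, hTsub⟩ := hball
      refine ⟨interior T, isOpen_interior, mem_interior_iff_mem_nhds.2 hT, ?_⟩
      intro a b ha hb
      have ha' : g a ∈ UniformSpace.ball (g ⟨x, hx⟩) V' := hTsub (show (a : ℕ → ℕ) ∈ T from interior_subset ha)
      have hb' : g b ∈ UniformSpace.ball (g ⟨x, hx⟩) V' := hTsub (show (b : ℕ → ℕ) ∈ T from interior_subset hb)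
      exact hV'c (SetRel.prodMk_mem_comp (SetRel.symm V' ha') hb')
    · rintro x ⟨hxc, hxW⟩
      rw [mem_iInter] at hxW
      obtain ⟨u, hu, hulim⟩ := mem_closure_iff_seq_limit.1 hxc
      set s : ℕ → (ℕ → ℕ) := fun k => g ⟨u k, hu k⟩ with hs
      have hsF : ∀ k, s k ∈ F := fun k => (hg _).1
      have hcauchy : CauchySeq s := by
        rw [hV.toHasBasis.cauchySeq_iff]
        rintro n -
        obtain ⟨U, hU, hxU, hsmall⟩ := hxW n
        obtain ⟨N, hN⟩ := (hulim.eventually (hU.mem_nhds hxU)).exists_forall_of_atTop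
        exact ⟨N, fun j hj k hk => hsmall _ _ (hN j hj) (hN k hk)⟩
      obtain ⟨β, hβF, hβlim⟩ := cauchySeq_tendsto_of_isComplete hF.isComplete hsF hcauchy
      have h1 : Tendsto (fun k => π (s k)) atTop (𝓝 (π β)) :=
        (hπ.continuousAt.tendsto).comp hβlim
      have h2 : (fun k => π (s k)) = fun k => u k := by
        funext k; exact (hg ⟨u k, hu k⟩).2
      rw [h2] at h1
      have : π β = x := tendsto_nhds_unique h1 hulim
      rw [← him]
      exact ⟨β, hβF, this⟩
  rw [key]
  exact isClosed_closure.isGδ.inter (IsGδ.iInter fun n => (hWopen n).isGδ)
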